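/- Let L be a finite lattice and let U be an up-set of L. Suppose that for any a, b ∈ L with a, b ∈ U, a ⋖ a ∨ b, and b ⋖ a ∨ b (where ⋖ denotes the covering relation), one has a ∧ b ∈ U. Then for all a, b ∈ U, a ∧ b ∈ U. -/
import Mathlib


theorem upSet_meet_closed {L : Type u} [Lattice L] [Finite L] (U : Set L)
    (hup : ∀ x ∈ U, ∀ y : L, x ≤ y → y ∈ U)
    (hcov : ∀ a ∈ U, ∀ b ∈ U, a ⋖ a ⊔ b → b ⋖ a ⊔ b → a ⊓ b ∈ U) :
    ∀ a ∈ U, ∀ b ∈ U, a ⊓ b ∈ U := by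
  have key : ∀ s a b : L, a ∈ U → b ∈ U → a ⊔ b ≤ s → a ⊓ b ∈ U := by
    intro s
    induction s using WellFoundedLT.induction with
    | _ s ihs =>
      intro a
      induction a using WellFoundedGT.induction with
      | _ a iha =>
        intro b
        induction b using WellFoundedGT.induction with
        | _ b ihb =>
          intro ha hb hle
          by_cases hba : b ≤ a
          · simpa [inf_eq_right.mpr hba] using hb
          by_cases hab : a ≤ b
          · simpa [inf_eq_left.mpr hab] using ha
          have haj : a < a ⊔ b := left_lt_sup.mpr hba
          have hbj : b < a ⊔ b := right_lt_sup.mpr hab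
          by_cases hca : a ⋖ a ⊔ b
          · by_cases hcb : b ⋖ a ⊔ b
            · exact hcov a ha b hb hca hcb
            · obtain ⟨c, hbc, hcj⟩ := (not_covBy_iff hbj).mp hcb
              have hcU : c ∈ U := hup b hb c hbc.le
              have hcs : c < s := lt_of_lt_of_le hcj hle
              have h1 : a ⊓ c ∈ U :=
                ihb c hbc ha hcU (sup_le (le_sup_left.trans hle) hcs.le)
              have h2 : b ⊓ (a ⊓ c) ∈ U :=
                ihs c hcs b (a ⊓ c) hb h1 (sup_le hbc.le inf_le_right)
              have heq : b ⊓ (a ⊓ c) = a ⊓ b := by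
                rw [inf_comm a c, ← inf_assoc, inf_eq_left.mpr hbc.le, inf_comm]
              rwa [heq] at h2
          · obtain ⟨c, hac, hcj⟩ := (not_covBy_iff haj).mp hca
            have hcU : c ∈ U := hup a ha c hac.le
            have hcs : c < s := lt_of_lt_of_le hcj hle
            have h1 : c ⊓ b ∈ U :=
              iha c hac b hcU hb (sup_le hcs.le (le_sup_right.trans hle))
            have h2 : a ⊓ (c ⊓ b) ∈ U :=
              ihs c hcs a (c ⊓ b) ha h1 (sup_le hac.le inf_le_left)
            have heq : a ⊓ (c ⊓ b) = a ⊓ b := by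
              rw [← inf_assoc, inf_eq_left.mpr hac.le]
            rwa [heq] at h2
  intro a ha b hb
  exact key (a ⊔ b) a b ha hb le_rfl
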